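/- Let W : SL(2) → ℝ be objective and isotropic. Then the following are equivalent: (i) W is rank-one convex; (ii) W is polyconvex; (iii) the map φ̃ : ℝ → ℝ, φ̃(γ) = W(K(γ)), where K(γ) has rows (1, γ) and (0, 1), is convex on ℝ; (iv) the unique function φ : [0,∞) → ℝ with W(F) = φ(λmax(F) − 1/λmax(F)) for all F ∈ SL(2) is nondecreasing and convex on [0,∞). -/

import Mathlib

open Matrix

/-- The largest singular value of a real 2×2 matrix `F`, i.e. the square root of
the largest eigenvalue of `FᵀF`. -/
noncomputable def lambdaMax (F : Matrix (Fin 2) (Fin 2) ℝ) : ℝ :=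
  Real.sqrt (((Fᵀ * F).trace + Real.sqrt ((Fᵀ * F).trace ^ 2 - 4 * (Fᵀ * F).det)) / 2)

/-- Rank-one convexity on `SL(2)`: for every `F` with `det F = 1` and all
`ξ, η ∈ ℝ²` with `⟨F⁻ᵀ, ξηᵀ⟩ = 0`, the map `t ↦ W(F + t·ξηᵀ)` is convex. -/
def RankOneConvexSL (W : Matrix (Fin 2) (Fin 2) ℝ → ℝ) : Prop :=
  ∀ F : Matrix (Fin 2) (Fin 2) ℝ, F.det = 1 →
    ∀ ξ η : Fin 2 → ℝ, ((vecMulVec ξ η)ᵀ * F⁻¹ᵀ).trace = 0 →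
      ConvexOn ℝ Set.univ (fun t : ℝ => W (F + t • vecMulVec ξ η))

/-- Convexity for extended-real-valued functions on `ℝ^{2×2} × ℝ`. -/
def ConvexEReal (P : Matrix (Fin 2) (Fin 2) ℝ × ℝ → EReal) : Prop :=
  ∀ x y : Matrix (Fin 2) (Fin 2) ℝ × ℝ, ∀ a b : ℝ, 0 ≤ a → 0 ≤ b → a + b = 1 →
    P (a • x + b • y) ≤ (a : EReal) * P x + (b : EReal) * P y

/-- Polyconvexity on `SL(2)` in the sense of Mielke: the extension of `W` by
`+∞` outside `SL(2)` is a convex function of `(F, det F)`. -/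
def PolyconvexSL (W : Matrix (Fin 2) (Fin 2) ℝ → ℝ) : Prop :=
  ∃ P : Matrix (Fin 2) (Fin 2) ℝ × ℝ → EReal, ConvexEReal P ∧
    ∀ F : Matrix (Fin 2) (Fin 2) ℝ,
      (if F.det = 1 then (W F : EReal) else ⊤) = P (F, F.det)

section helpers

lemma tri (x₁ y₁ x₂ y₂ : ℝ) : Real.sqrt ((x₁+x₂)^2+(y₁+y₂)^2)
    ≤ Real.sqrt (x₁^2+y₁^2) + Real.sqrt (x₂^2+y₂^2) := by
  have h1 := Real.sq_sqrt (by positivity : (0:ℝ) ≤ x₁^2+y₁^2)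
  have h2 := Real.sq_sqrt (by positivity : (0:ℝ) ≤ x₂^2+y₂^2)
  have hs1 := Real.sqrt_nonneg (x₁^2+y₁^2)
  have hs2 := Real.sqrt_nonneg (x₂^2+y₂^2)
  have key : x₁*x₂+y₁*y₂ ≤ Real.sqrt (x₁^2+y₁^2) * Real.sqrt (x₂^2+y₂^2) := by
    rcases le_or_gt (x₁*x₂+y₁*y₂) 0 with h|h
    · exact h.trans (by positivity)
    · have : (x₁*x₂+y₁*y₂)^2 ≤ (Real.sqrt (x₁^2+y₁^2) * Real.sqrt (x₂^2+y₂^2))^2 := by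
        rw [mul_pow, h1, h2]; nlinarith [sq_nonneg (x₁*y₂ - x₂*y₁)]
      nlinarith [mul_nonneg hs1 hs2]
  have : (x₁+x₂)^2+(y₁+y₂)^2 ≤ (Real.sqrt (x₁^2+y₁^2) + Real.sqrt (x₂^2+y₂^2))^2 := by
    nlinarith
  calc Real.sqrt ((x₁+x₂)^2+(y₁+y₂)^2)
      ≤ Real.sqrt ((Real.sqrt (x₁^2+y₁^2) + Real.sqrt (x₂^2+y₂^2))^2) := Real.sqrt_le_sqrt this
    _ = _ := Real.sqrt_sq (by positivity)

lemma homog (a x y : ℝ) (ha : 0 ≤ a) :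
    Real.sqrt ((a*x)^2+(a*y)^2) = a * Real.sqrt (x^2+y^2) := by
  rw [show (a*x)^2+(a*y)^2 = a^2 * (x^2+y^2) by ring, Real.sqrt_mul (by positivity),
    Real.sqrt_sq ha]

lemma tri' (a b x₁ y₁ x₂ y₂ : ℝ) (ha : 0 ≤ a) (hb : 0 ≤ b) :
    Real.sqrt ((a*x₁+b*x₂)^2+(a*y₁+b*y₂)^2)
      ≤ a * Real.sqrt (x₁^2+y₁^2) + b * Real.sqrt (x₂^2+y₂^2) := by
  calc Real.sqrt ((a*x₁+b*x₂)^2+(a*y₁+b*y₂)^2)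
      ≤ Real.sqrt ((a*x₁)^2+(a*y₁)^2) + Real.sqrt ((b*x₂)^2+(b*y₂)^2) := tri _ _ _ _
    _ = _ := by rw [homog _ _ _ ha, homog _ _ _ hb]

lemma sqrt_affine_convex (p q u v : ℝ) :
    ConvexOn ℝ Set.univ (fun t : ℝ => Real.sqrt ((p+t*u)^2+(q+t*v)^2)) := by
  refine ⟨convex_univ, fun t₁ _ t₂ _ a b ha hb hab => ?_⟩
  have e1 : p + (a*t₁+b*t₂)*u = a*(p+t₁*u) + b*(p+t₂*u) := by linear_combination p * hab.symm
  have e2 : q + (a*t₁+b*t₂)*v = a*(q+t₁*v) + b*(q+t₂*v) := by linear_combination q * hab.symm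
  simp only [smul_eq_mul]
  rw [e1, e2]
  exact tri' a b _ _ _ _ ha hb

lemma stretch (F : Matrix (Fin 2) (Fin 2) ℝ) (h : F.det = 1) :
    lambdaMax F - 1 / lambdaMax F
      = Real.sqrt ((F 0 0 - F 1 1)^2 + (F 0 1 + F 1 0)^2) := by
  have hdet : F 0 0 * F 1 1 - F 0 1 * F 1 0 = 1 := by
    rw [Matrix.det_fin_two] at h; linarith
  have hT : (Fᵀ * F).trace = F 0 0^2 + F 1 0^2 + (F 0 1^2 + F 1 1^2) := by
    simp [Matrix.trace_fin_two, Matrix.mul_apply, Fin.sum_univ_two, Matrix.transpose_apply]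
    ring
  have hD : (Fᵀ * F).det = 1 := by
    rw [Matrix.det_mul, Matrix.det_transpose, h, one_mul]
  set T : ℝ := (Fᵀ * F).trace with hTdef
  have hT2 : T - 2 = (F 0 0 - F 1 1)^2 + (F 0 1 + F 1 0)^2 := by
    rw [hT]; nlinarith [hdet]
  have hTge : (2:ℝ) ≤ T := by nlinarith [sq_nonneg (F 0 0 - F 1 1), sq_nonneg (F 0 1 + F 1 0)]
  set s : ℝ := Real.sqrt (T^2 - 4*(Fᵀ*F).det) with hsdef
  have hs0 : 0 ≤ s := Real.sqrt_nonneg _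
  have hssq : s^2 = T^2 - 4 := by
    rw [hsdef, hD, Real.sq_sqrt (by nlinarith)]; ring
  have hlam : lambdaMax F = Real.sqrt ((T + s)/2) := rfl
  have hTs : 0 < (T + s)/2 := by nlinarith
  have hl2 : (lambdaMax F)^2 = (T+s)/2 := by
    rw [hlam, Real.sq_sqrt hTs.le]
  have hlpos : 0 < lambdaMax F := by
    rw [hlam]; exact Real.sqrt_pos.mpr hTs
  have hlge : 1 ≤ lambdaMax F := by nlinarith
  have hinv2 : (1 / lambdaMax F)^2 = 2/(T+s) := by
    rw [div_pow, hl2, one_pow, one_div, inv_div]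
  have hsum : (lambdaMax F)^2 + (1/lambdaMax F)^2 = T := by
    rw [hl2, hinv2]; field_simp; nlinarith
  have hnn : 0 ≤ lambdaMax F - 1 / lambdaMax F := by
    have : 1 / lambdaMax F ≤ 1 := by
      rw [div_le_one hlpos]; exact hlge
    linarith
  have hne : lambdaMax F ≠ 0 := hlpos.ne'
  have hsq : (lambdaMax F - 1/lambdaMax F)^2 = T - 2 := by
    have expand : (lambdaMax F - 1/lambdaMax F)^2
        = (lambdaMax F)^2 + (1/lambdaMax F)^2 - 2 := by
      field_simp
      ring
    rw [expand, hsum]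
  rw [← hT2, ← hsq, Real.sqrt_sq hnn]

lemma comp_convex (φ : ℝ → ℝ) (hm : MonotoneOn φ (Set.Ici 0))
    (hc : ConvexOn ℝ (Set.Ici 0) φ) (g : ℝ → ℝ)
    (hg : ConvexOn ℝ Set.univ g) (h0 : ∀ t, 0 ≤ g t) :
    ConvexOn ℝ Set.univ (fun t => φ (g t)) := by
  refine ⟨convex_univ, fun t₁ _ t₂ _ a b ha hb hab => ?_⟩
  have h1 : g (a • t₁ + b • t₂) ≤ a * g t₁ + b * g t₂ := by
    simpa [smul_eq_mul] using hg.2 (Set.mem_univ t₁) (Set.mem_univ t₂) ha hb hab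
  have h2 : (0:ℝ) ≤ a * g t₁ + b * g t₂ := by
    have := mul_nonneg ha (h0 t₁); have := mul_nonneg hb (h0 t₂); linarith
  simp only [smul_eq_mul]
  calc φ (g (a • t₁ + b • t₂)) ≤ φ (a * g t₁ + b * g t₂) := hm (h0 _) h2 h1
    _ ≤ a * φ (g t₁) + b * φ (g t₂) := by
        simpa [smul_eq_mul] using hc.2 (h0 t₁) (h0 t₂) ha hb hab

end helpers

/-- **Theorem, main result.** For objective and isotropic
`W : SL(2) → ℝ` with representing function `φ`, the following are equivalent:
(i) `W` is rank-one convex; (ii) `W` is polyconvex; (iii) `γ ↦ W(K(γ))` is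
convex on `ℝ`; (iv) `φ` is nondecreasing and convex on `[0,∞)`. -/
theorem rankOneConvex_iff_polyconvex_SL2
    (W : Matrix (Fin 2) (Fin 2) ℝ → ℝ)
    (hW : ∀ F : Matrix (Fin 2) (Fin 2) ℝ, F.det = 1 →
      ∀ Q₁ Q₂ : Matrix (Fin 2) (Fin 2) ℝ, Q₁ᵀ * Q₁ = 1 → Q₂ᵀ * Q₂ = 1 →
        W (Q₁ * F * Q₂) = W F)
    (φ : ℝ → ℝ)
    (hφ : ∀ F : Matrix (Fin 2) (Fin 2) ℝ, F.det = 1 →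
      W F = φ (lambdaMax F - 1 / lambdaMax F)) :
    (RankOneConvexSL W ↔ PolyconvexSL W) ∧
    (PolyconvexSL W ↔ ConvexOn ℝ Set.univ (fun γ : ℝ => W !![1, γ; 0, 1])) ∧
    (ConvexOn ℝ Set.univ (fun γ : ℝ => W !![1, γ; 0, 1]) ↔
      MonotoneOn φ (Set.Ici 0) ∧ ConvexOn ℝ (Set.Ici 0) φ) := by
  have hKdet : ∀ γ : ℝ, (!![1,γ;0,1] : Matrix (Fin 2) (Fin 2) ℝ).det = 1 := by
    intro γ; simp [Matrix.det_fin_two_of]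
  have hWK : ∀ γ : ℝ, W !![1,γ;0,1] = φ |γ| := by
    intro γ
    rw [hφ _ (hKdet γ), stretch _ (hKdet γ)]
    congr 1
    norm_num
    exact Real.sqrt_sq_eq_abs γ
  -- (i) → (iii)
  have hAC : RankOneConvexSL W → ConvexOn ℝ Set.univ (fun γ : ℝ => W !![1, γ; 0, 1]) := by
    intro hA
    have hcond : ((vecMulVec (![1,0] : Fin 2 → ℝ) ![0,1])ᵀ * (1 : Matrix (Fin 2) (Fin 2) ℝ)⁻¹ᵀ).trace = 0 := by
      simp [Matrix.trace_fin_two, Matrix.mul_apply, Fin.sum_univ_two, Matrix.vecMulVec_apply]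
    have h := hA 1 (by simp) ![1,0] ![0,1] hcond
    have he : ∀ t : ℝ, (1 : Matrix (Fin 2) (Fin 2) ℝ) + t • vecMulVec ![1,0] ![0,1] = !![1,t;0,1] := by
      intro t; ext i j
      fin_cases i <;> fin_cases j <;>
        simp [Matrix.vecMulVec_apply, Matrix.one_apply]
    have : (fun t : ℝ => W (1 + t • vecMulVec ![1,0] ![0,1])) = fun γ : ℝ => W !![1,γ;0,1] := by
      funext t; rw [he t]
    rwa [this] at h
  -- (iii) → (iv)
  have hCD : ConvexOn ℝ Set.univ (fun γ : ℝ => W !![1, γ; 0, 1]) →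
      MonotoneOn φ (Set.Ici 0) ∧ ConvexOn ℝ (Set.Ici 0) φ := by
    intro hC
    have hf : ConvexOn ℝ Set.univ (fun γ : ℝ => φ |γ|) := by
      have : (fun γ : ℝ => W !![1,γ;0,1]) = fun γ : ℝ => φ |γ| := funext hWK
      rwa [this] at hC
    constructor
    · intro x hx y hy hxy
      simp only [Set.mem_Ici] at hx hy
      rcases eq_or_lt_of_le (hx.trans hxy) with h0|hypos
      · have : x = 0 := le_antisymm (hxy.trans h0.symm.le) hx
        rw [this, ← h0]
      · have h2y : (0:ℝ) < 2*y := by linarith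
        have key := hf.2 (Set.mem_univ (-y)) (Set.mem_univ y)
          (show (0:ℝ) ≤ (y-x)/(2*y) from div_nonneg (by linarith) (by linarith))
          (show (0:ℝ) ≤ (y+x)/(2*y) by positivity)
          (show (y-x)/(2*y) + (y+x)/(2*y) = 1 by field_simp; ring)
        have harg : ((y-x)/(2*y)) • (-y) + ((y+x)/(2*y)) • y = x := by
          rw [smul_eq_mul, smul_eq_mul, div_mul_eq_mul_div, div_mul_eq_mul_div, ← add_div,
            div_eq_iff h2y.ne']; ring
        rw [harg] at key
        have : φ |x| ≤ ((y-x)/(2*y)) * φ |(-y)| + ((y+x)/(2*y)) * φ |y| := by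
          simpa [smul_eq_mul] using key
        rw [abs_neg, abs_of_nonneg hx, abs_of_nonneg hypos.le] at this
        calc φ x ≤ ((y-x)/(2*y)) * φ y + ((y+x)/(2*y)) * φ y := this
          _ = φ y := by field_simp; ring
    · refine ⟨convex_Ici 0, fun x hx y hy a b ha hb hab => ?_⟩
      simp only [Set.mem_Ici] at hx hy
      have := hf.2 (Set.mem_univ x) (Set.mem_univ y) ha hb hab
      have hcomb : (0:ℝ) ≤ a * x + b * y := by
        have := mul_nonneg ha hx; have := mul_nonneg hb hy; linarith
      simpa [smul_eq_mul, abs_of_nonneg hx, abs_of_nonneg hy, abs_of_nonneg hcomb] using this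
  -- (iv) → (i)
  have hDA : (MonotoneOn φ (Set.Ici 0) ∧ ConvexOn ℝ (Set.Ici 0) φ) → RankOneConvexSL W := by
    rintro ⟨hm, hc⟩ F hdetF ξ η hcond
    have hdet2 : F 0 0 * F 1 1 - F 0 1 * F 1 0 = 1 := by
      rw [Matrix.det_fin_two] at hdetF; linarith
    have hFinv : F⁻¹ = !![F 1 1, -F 0 1; -F 1 0, F 0 0] := by
      rw [Matrix.inv_def, Matrix.adjugate_fin_two, hdetF]
      simp
    rw [hFinv] at hcond
    have hcond' : F 1 1 * (ξ 0 * η 0) - F 1 0 * (ξ 0 * η 1)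
        - F 0 1 * (ξ 1 * η 0) + F 0 0 * (ξ 1 * η 1) = 0 := by
      simp [Matrix.trace_fin_two, Matrix.mul_apply, Fin.sum_univ_two,
        Matrix.vecMulVec_apply, Matrix.transpose_apply, Matrix.vecHead, Matrix.vecTail,
        Matrix.cons_val_zero, Matrix.cons_val_one, Matrix.head_cons] at hcond
      linarith
    have hdet_line : ∀ t : ℝ, (F + t • vecMulVec ξ η).det = 1 := by
      intro t
      rw [Matrix.det_fin_two]
      simp only [Matrix.add_apply, Matrix.smul_apply, Matrix.vecMulVec_apply, smul_eq_mul]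
      linear_combination hdet2 + t * hcond'
    have key : (fun t : ℝ => W (F + t • vecMulVec ξ η))
        = fun t : ℝ => φ (Real.sqrt
            (((F 0 0 - F 1 1) + t * (ξ 0 * η 0 - ξ 1 * η 1))^2
              + ((F 0 1 + F 1 0) + t * (ξ 0 * η 1 + ξ 1 * η 0))^2)) := by
      funext t
      rw [hφ _ (hdet_line t), stretch _ (hdet_line t)]
      congr 2 <;>
        simp only [Matrix.add_apply, Matrix.smul_apply, Matrix.vecMulVec_apply, smul_eq_mul] <;>
        ring
    rw [key]
    exact comp_convex φ hm hc _ (sqrt_affine_convex _ _ _ _) (fun t => Real.sqrt_nonneg _)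
  -- (iv) → (ii)
  have hDB : (MonotoneOn φ (Set.Ici 0) ∧ ConvexOn ℝ (Set.Ici 0) φ) → PolyconvexSL W := by
    rintro ⟨hm, hc⟩
    set m : Matrix (Fin 2) (Fin 2) ℝ → ℝ :=
      fun G => Real.sqrt ((G 0 0 - G 1 1)^2 + (G 0 1 + G 1 0)^2) with hmdef
    have hm0 : ∀ G, 0 ≤ m G := fun G => Real.sqrt_nonneg _
    refine ⟨fun p => if p.2 = 1 then ((φ (m p.1)) : EReal) else ⊤, ?_, ?_⟩
    · intro x y a b ha hb hab
      set P : Matrix (Fin 2) (Fin 2) ℝ × ℝ → EReal :=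
        fun p => if p.2 = 1 then ((φ (m p.1)) : EReal) else ⊤ with hPdef
      have hPbot : ∀ p, P p ≠ ⊥ := by
        intro p; rw [hPdef]; dsimp only; split
        · exact EReal.coe_ne_bot _
        · simp
      rcases eq_or_lt_of_le ha with ha0|hapos
      · have hb1 : b = 1 := by linarith
        rw [← ha0, hb1]
        simp [EReal.zero_mul]
      rcases eq_or_lt_of_le hb with hb0|hbpos
      · have ha1 : a = 1 := by linarith
        rw [← hb0, ha1]
        simp [EReal.zero_mul]
      by_cases hx : x.2 = 1
      · by_cases hy : y.2 = 1
        · have hxy2 : (a • x + b • y).2 = 1 := by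
            simp [Prod.snd_add, Prod.smul_snd, hx, hy, smul_eq_mul, hab]
          rw [hPdef]
          simp only [hxy2, hx, hy, if_pos]
          have hreal : φ (m ((a • x + b • y).1)) ≤ a * φ (m x.1) + b * φ (m y.1) := by
            have hsub : m ((a • x + b • y).1) ≤ a * m x.1 + b * m y.1 := by
              have e : (a • x + b • y).1 = a • x.1 + b • y.1 := rfl
              rw [e, hmdef]
              have e2 : ∀ i j : Fin 2, (a • x.1 + b • y.1) i j = a * x.1 i j + b * y.1 i j := by
                intro i j; simp [Matrix.add_apply, Matrix.smul_apply, smul_eq_mul]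
              simp only [e2]
              calc Real.sqrt ((a * x.1 0 0 + b * y.1 0 0 - (a * x.1 1 1 + b * y.1 1 1))^2
                    + (a * x.1 0 1 + b * y.1 0 1 + (a * x.1 1 0 + b * y.1 1 0))^2)
                  = Real.sqrt ((a * (x.1 0 0 - x.1 1 1) + b * (y.1 0 0 - y.1 1 1))^2
                    + (a * (x.1 0 1 + x.1 1 0) + b * (y.1 0 1 + y.1 1 0))^2) := by ring_nf
                _ ≤ _ := tri' a b _ _ _ _ ha hb
            have hnn : (0:ℝ) ≤ a * m x.1 + b * m y.1 := by
              have := mul_nonneg ha (hm0 x.1); have := mul_nonneg hb (hm0 y.1); linarith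
            calc φ (m ((a • x + b • y).1)) ≤ φ (a * m x.1 + b * m y.1) :=
                  hm (hm0 _) hnn hsub
              _ ≤ a * φ (m x.1) + b * φ (m y.1) := by
                  simpa [smul_eq_mul] using hc.2 (hm0 x.1) (hm0 y.1) ha hb hab
          calc ((φ (m ((a • x + b • y).1)) : ℝ) : EReal)
              ≤ ((a * φ (m x.1) + b * φ (m y.1) : ℝ) : EReal) := EReal.coe_le_coe_iff.mpr hreal
            _ = (a : EReal) * (φ (m x.1) : EReal) + (b : EReal) * (φ (m y.1) : EReal) := by
                rw [EReal.coe_add, EReal.coe_mul, EReal.coe_mul]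
        · have : P y = ⊤ := by rw [hPdef]; simp [hy]
          have hbtop : (b : EReal) * P y = ⊤ := by
            rw [this]; exact EReal.coe_mul_top_of_pos hbpos
          have hane : (a : EReal) * P x ≠ ⊥ := by
            have hPx : P x = ((φ (m x.1) : ℝ) : EReal) := by rw [hPdef]; simp [hx]
            rw [hPx, ← EReal.coe_mul]; exact EReal.coe_ne_bot _
          rw [hbtop, EReal.add_top_of_ne_bot hane]
          exact le_top
      · have : P x = ⊤ := by rw [hPdef]; simp [hx]
        have hatop : (a : EReal) * P x = ⊤ := by
          rw [this]; exact EReal.coe_mul_top_of_pos hapos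
        have hbne : (b : EReal) * P y ≠ ⊥ := by
          by_cases hy : y.2 = 1
          · have hPy : P y = ((φ (m y.1) : ℝ) : EReal) := by rw [hPdef]; simp [hy]
            rw [hPy, ← EReal.coe_mul]; exact EReal.coe_ne_bot _
          · have hPy : P y = ⊤ := by rw [hPdef]; simp [hy]
            rw [hPy, EReal.coe_mul_top_of_pos hbpos]
            simp
        rw [hatop, EReal.top_add_of_ne_bot hbne]
        exact le_top
    · intro F
      by_cases h : F.det = 1
      · simp only [h, if_pos]
        congr 1
        rw [hφ F h, stretch F h]
      · simp only [h, if_neg, if_false]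
  -- (ii) → (iii)
  have hBC : PolyconvexSL W → ConvexOn ℝ Set.univ (fun γ : ℝ => W !![1, γ; 0, 1]) := by
    rintro ⟨P, hPc, hPW⟩
    have hP1 : ∀ γ : ℝ, ((W !![1,γ;0,1] : ℝ) : EReal) = P (!![1,γ;0,1], 1) := by
      intro γ
      have := hPW !![1,γ;0,1]
      rwa [hKdet γ, if_pos rfl] at this
    refine ⟨convex_univ, fun γ₁ _ γ₂ _ a b ha hb hab => ?_⟩
    have hcomb := hPc (!![1,γ₁;0,1], 1) (!![1,γ₂;0,1], 1) a b ha hb hab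
    have heq : a • ((!![1,γ₁;0,1] : Matrix (Fin 2) (Fin 2) ℝ), (1:ℝ))
        + b • ((!![1,γ₂;0,1] : Matrix (Fin 2) (Fin 2) ℝ), (1:ℝ))
        = (!![1, a*γ₁+b*γ₂; 0, 1], 1) := by
      refine Prod.ext ?_ ?_
      · show a • (!![1,γ₁;0,1] : Matrix (Fin 2) (Fin 2) ℝ) + b • !![1,γ₂;0,1]
          = !![1, a*γ₁+b*γ₂; 0,1]
        ext i j
        fin_cases i <;> fin_cases j <;>
          simp [Matrix.smul_apply, smul_eq_mul] <;> linarith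
      · show a • (1:ℝ) + b • (1:ℝ) = 1
        simp [smul_eq_mul]; linarith
    rw [heq, ← hP1, ← hP1, ← hP1] at hcomb
    have : ((W !![1, a*γ₁+b*γ₂; 0, 1] : ℝ) : EReal)
        ≤ ((a * W !![1,γ₁;0,1] + b * W !![1,γ₂;0,1] : ℝ) : EReal) := by
      rw [EReal.coe_add, EReal.coe_mul, EReal.coe_mul]
      exact hcomb
    have hR := EReal.coe_le_coe_iff.mp this
    simpa [smul_eq_mul] using hR
  exact ⟨⟨fun hA => hDB (hCD (hAC hA)), fun hB => hDA (hCD (hBC hB))⟩,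
    ⟨hBC, fun hC => hDB (hCD hC)⟩,
    ⟨hCD, fun hD => hBC (hDB hD)⟩⟩
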